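/- Let E : ℕ → ℝ have non-increasing first differences Δ_i := E(i+1) - E(i), and let i_max be a natural number. Define Δ_i and ζ_i := E(i) - i·Δ_i for i ∈ {0,...,i_max}. Then for every real t with 0 ≤ t ≤ i_max, the linear interpolation of E at t equals min over i ∈ {0,...,i_max} of (Δ_i·t + ζ_i). -/

import Mathlib

open Finset

noncomputable def interp (E : ℕ → ℝ) (t : ℝ) : ℝ :=
  (t - ⌊t⌋) * E (⌊t⌋.toNat + 1) + (1 - (t - ⌊t⌋)) * E ⌊t⌋.toNat

/-- Theorem 2: a discretely concave piecewise-linear interpolation equals the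
pointwise minimum of its chord extensions `Δ_i·t + ζ_i`. -/
theorem interp_eq_min_chords
    (E : ℕ → ℝ)
    (hconc : ∀ i : ℕ, E (i + 2) - E (i + 1) ≤ E (i + 1) - E i)
    (imax : ℕ) (t : ℝ) (ht0 : 0 ≤ t) (ht1 : t ≤ imax) :
    interp E t =
      (Finset.range (imax + 1)).inf' (by simp)
        (fun i => (E (i + 1) - E i) * t + (E i - i * (E (i + 1) - E i))) := by
  set f : ℕ → ℝ := fun i => (E (i + 1) - E i) * t + (E i - i * (E (i + 1) - E i)) with hf
  set n := ⌊t⌋.toNat with hn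
  have hfl : (0:ℤ) ≤ ⌊t⌋ := Int.floor_nonneg.2 ht0
  have hnr : (n:ℝ) = (⌊t⌋:ℝ) := by
    rw [hn]; exact_mod_cast congrArg (fun z : ℤ => (z:ℝ)) (Int.toNat_of_nonneg hfl)
  have hnt : (n:ℝ) ≤ t := by rw [hnr]; exact Int.floor_le t
  have htn : t < (n:ℝ) + 1 := by rw [hnr]; exact Int.lt_floor_add_one t
  have hnmax : n ≤ imax := by
    have h1 : ⌊t⌋ ≤ (imax:ℤ) := by
      have := Int.floor_le_floor (R := ℝ) ht1
      simpa using this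
    exact Int.toNat_le.mpr h1
  -- one-step comparisons between adjacent chords
  have key1 : ∀ j : ℕ, (j:ℝ) + 1 ≤ t → f (j + 1) ≤ f j := by
    intro j hj
    simp only [hf]
    push_cast
    nlinarith [mul_nonneg (sub_nonneg.2 (hconc j)) (sub_nonneg.2 hj)]
  have key2 : ∀ j : ℕ, t ≤ (j:ℝ) + 1 → f j ≤ f (j + 1) := by
    intro j hj
    simp only [hf]
    push_cast
    nlinarith [mul_nonneg (sub_nonneg.2 (hconc j)) (sub_nonneg.2 hj)]
  have hA : ∀ k : ℕ, f n ≤ f (n - k) := by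
    intro k
    induction k with
    | zero => simp
    | succ k ih =>
      rcases Nat.lt_or_ge k n with h | h
      · have h1 : n - (k + 1) + 1 = n - k := by omega
        have h3 : ((n - (k + 1) : ℕ):ℝ) + 1 ≤ t := by
          have h4 : ((n - (k + 1) : ℕ):ℝ) + 1 = ((n - k : ℕ):ℝ) := by
            exact_mod_cast congrArg (fun m : ℕ => (m:ℝ)) h1
          rw [h4]
          calc ((n - k : ℕ):ℝ) ≤ (n:ℝ) := by exact_mod_cast Nat.sub_le n k
            _ ≤ t := hnt
        calc f n ≤ f (n - k) := ih
          _ = f (n - (k + 1) + 1) := by rw [h1]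
          _ ≤ f (n - (k + 1)) := by
              have := key1 (n - (k + 1)) h3
              linarith
      · have h2 : n - (k + 1) = n - k := by omega
        rw [h2]; exact ih
  have hB : ∀ k : ℕ, f n ≤ f (n + k) := by
    intro k
    induction k with
    | zero => simp
    | succ k ih =>
      have h3 : t ≤ ((n + k : ℕ):ℝ) + 1 := by
        push_cast
        have : (0:ℝ) ≤ (k:ℝ) := Nat.cast_nonneg k
        linarith
      calc f n ≤ f (n + k) := ih
        _ ≤ f (n + k + 1) := key2 (n + k) h3
        _ = f (n + (k + 1)) := by ring_nf
  have hmin : ∀ i : ℕ, f n ≤ f i := by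
    intro i
    rcases le_or_gt i n with h | h
    · obtain ⟨k, rfl⟩ : ∃ k, i = n - k := ⟨n - i, by omega⟩
      exact hA _
    · obtain ⟨k, rfl⟩ : ∃ k, i = n + k := ⟨i - n, by omega⟩
      exact hB _
  have hinterp : interp E t = f n := by
    simp only [interp, hf, ← hn, ← hnr]
    ring
  rw [hinterp]
  apply le_antisymm
  · exact le_inf' _ _ (fun i _ => hmin i)
  · exact inf'_le _ (mem_range.2 (by omega))
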